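/- With the notation of the normalized setup for geodesics in Y, writing ᾱᵢ = σᵢ|_{[0,t₀]} and β̄ᵢ = σᵢ|_{[t₀,d(p,p')]} for the components of σ split at t₀, one has |L(ᾱᵢ) − a| ≤ 50δ and |L(β̄ᵢ) − b| ≤ 50δ for i = 1,2, where L denotes length. -/

import Mathlib

open Set Metric Filter
open scoped ENNReal NNReal

/-- `γ`, restricted to `[0, dist x y]`, is a unit-speed (arclength-parameterized) geodesic
segment from `x` to `y`. -/
def IsGeodSegment {X : Type*} [MetricSpace X] (γ : ℝ → X) (x y : X) : Prop :=
  γ 0 = x ∧ γ (dist x y) = y ∧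
    ∀ s ∈ Set.Icc (0 : ℝ) (dist x y), ∀ t ∈ Set.Icc (0 : ℝ) (dist x y),
      dist (γ s) (γ t) = |s - t|

/-- A metric space is geodesic if any two points are joined by a geodesic segment. -/
def GeodesicMS (X : Type*) [MetricSpace X] : Prop :=
  ∀ x y : X, ∃ γ : ℝ → X, IsGeodSegment γ x y

/-- The image (side) of a geodesic segment from `x` to `y`. -/
def segImg {X : Type*} [MetricSpace X] (γ : ℝ → X) (x y : X) : Set X :=
  γ '' Set.Icc 0 (dist x y)

/-- `X` is `δ`-hyperbolic: each side of each geodesic triangle is contained in the closed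
`δ`-neighborhood of the union of the two other sides.  (Since the vertices `x y z` and the
three sides are universally quantified, the condition for the single side `γ_{xy}` implies
it for all three sides.) -/
def DeltaHyp (X : Type*) [MetricSpace X] (δ : ℝ) : Prop :=
  ∀ (x y z : X) (gxy gxz gyz : ℝ → X),
    IsGeodSegment gxy x y → IsGeodSegment gxz x z → IsGeodSegment gyz y z →
      ∀ s ∈ Set.Icc (0 : ℝ) (dist x y),
        ∃ w ∈ segImg gxz x z ∪ segImg gyz y z, dist (gxy s) w ≤ δ

/-- `X` is hyperbolic if it is `δ`-hyperbolic for some `δ ≥ 0`. -/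
def GromovHyperbolic (X : Type*) [MetricSpace X] : Prop :=
  ∃ δ : ℝ, 0 ≤ δ ∧ DeltaHyp X δ

/-- The Gromov product `(y⬝z)_x`. -/
noncomputable def gp {X : Type*} [MetricSpace X] (y z x : X) : ℝ :=
  (dist y x + dist z x - dist y z) / 2

/-- A geodesic ray (unit-speed, defined on `[0,∞)`). -/
def IsRay {X : Type*} [MetricSpace X] (γ : ℝ → X) : Prop :=
  ∀ s ∈ Set.Ici (0 : ℝ), ∀ t ∈ Set.Ici (0 : ℝ), dist (γ s) (γ t) = |s - t|

/-- `B` is the Busemann function associated to some geodesic ray. -/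
def IsBusemann {X : Type*} [MetricSpace X] (B : X → ℝ) : Prop :=
  ∃ γ : ℝ → X, IsRay γ ∧
    ∀ x : X, Filter.Tendsto (fun t => dist x (γ t) - t) Filter.atTop (nhds (B x))

/-- `γ` is a `B`-ray: a geodesic ray along which `B` decreases with unit speed. -/
def IsBRay {X : Type*} [MetricSpace X] (B : X → ℝ) (γ : ℝ → X) : Prop :=
  IsRay γ ∧ ∀ t ∈ Set.Ici (0 : ℝ), B (γ t) = B (γ 0) - t

/-- A `T`-function on `[α,ω]`: `f t = |t - m| + k` for some `m ∈ [α,ω]` and `k ∈ ℝ`. -/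
def IsTFun (f : ℝ → ℝ) (α ω : ℝ) : Prop :=
  ∃ m ∈ Set.Icc α ω, ∃ k : ℝ, ∀ t ∈ Set.Icc α ω, f t = |t - m| + k

/-- A `δ`-`T`-function on `[α,ω]`: uniformly `δ`-close to a `T`-function. -/
def IsDeltaTFun (δ : ℝ) (f : ℝ → ℝ) (α ω : ℝ) : Prop :=
  ∃ g : ℝ → ℝ, IsTFun g α ω ∧ ∀ t ∈ Set.Icc α ω, |f t - g t| ≤ δ

/-- The interior (induced length) metric associated to the metric of `Z`: the infimum of
lengths (total variations) of continuous paths joining the two points, with value in `ℝ≥0∞`. -/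
noncomputable def intDist {Z : Type*} [MetricSpace Z] (p q : Z) : ℝ≥0∞ :=
  ⨅ (c : ℝ → Z) (_ : ContinuousOn c (Set.Icc 0 1)) (_ : c 0 = p) (_ : c 1 = q),
    eVariationOn c (Set.Icc (0 : ℝ) 1)

/-- The "Gromov product with a Busemann function": `(x'⬝B)_x = ½(d(x,x') + B(x) - B(x'))`. -/
noncomputable def gpB {X : Type*} [MetricSpace X] (B : X → ℝ) (x x' : X) : ℝ :=
  (dist x x' + B x - B x') / 2

/-- Unit-speed geodesic segment with respect to a bare distance function `D`. -/
def IsGeodSegmentD {Z : Type*} (D : Z → Z → ℝ) (γ : ℝ → Z) (x y : Z) : Prop :=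
  γ 0 = x ∧ γ (D x y) = y ∧
    ∀ s ∈ Set.Icc (0 : ℝ) (D x y), ∀ t ∈ Set.Icc (0 : ℝ) (D x y), D (γ s) (γ t) = |s - t|

/-- `δ`-hyperbolicity with respect to a bare distance function `D`. -/
def DeltaHypD {Z : Type*} (D : Z → Z → ℝ) (δ : ℝ) : Prop :=
  ∀ (x y z : Z) (gxy gxz gyz : ℝ → Z),
    IsGeodSegmentD D gxy x y → IsGeodSegmentD D gxz x z → IsGeodSegmentD D gyz y z →
      ∀ s ∈ Set.Icc (0 : ℝ) (D x y),
        ∃ w ∈ (gxz '' Set.Icc 0 (D x z)) ∪ (gyz '' Set.Icc 0 (D y z)), D (gxy s) w ≤ δ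

section Basics

variable {X : Type*} [MetricSpace X]

theorem myIsRay.dist {γ : ℝ → X} (h : IsRay γ) {s t : ℝ} (hs : 0 ≤ s) (ht : 0 ≤ t) :
    dist (γ s) (γ t) = |s - t| := h s hs t ht

theorem myBusemann_sub_le {B : X → ℝ} (hB : IsBusemann B) (x y : X) :
    B x - B y ≤ dist x y := by
  obtain ⟨γ₀, hray, hlim⟩ := hB
  have h := (hlim x).sub (hlim y)
  have : Tendsto (fun t : ℝ => (dist x (γ₀ t) - t) - (dist y (γ₀ t) - t)) atTop
      (nhds (B x - B y)) := h
  refine le_of_tendsto this (Filter.Eventually.of_forall fun t => ?_)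
  have := dist_triangle x y (γ₀ t)
  linarith

theorem myBusemann_lip {B : X → ℝ} (hB : IsBusemann B) (x y : X) :
    |B x - B y| ≤ dist x y := by
  rw [abs_sub_le_iff]
  exact ⟨myBusemann_sub_le hB x y, by rw [dist_comm]; exact myBusemann_sub_le hB y x⟩

theorem myBusemann_le_ray {B : X → ℝ} {γ₀ : ℝ → X} (hray : IsRay γ₀)
    (hlim : ∀ x : X, Tendsto (fun t => dist x (γ₀ t) - t) atTop (nhds (B x)))
    (u : X) {T : ℝ} (hT : 0 ≤ T) : B u ≤ dist u (γ₀ T) - T := by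
  refine le_of_tendsto (hlim u) ?_
  filter_upwards [Filter.eventually_ge_atTop T] with S hS
  have hS0 : (0:ℝ) ≤ S := le_trans hT hS
  have h1 : dist u (γ₀ S) ≤ dist u (γ₀ T) + dist (γ₀ T) (γ₀ S) := dist_triangle _ _ _
  have h2 : dist (γ₀ T) (γ₀ S) = |T - S| := hray T hT S hS0
  rw [abs_of_nonpos (by linarith)] at h2
  linarith

theorem myGp_tendsto {B : X → ℝ} {γ₀ : ℝ → X}
    (hlim : ∀ x : X, Tendsto (fun t => dist x (γ₀ t) - t) atTop (nhds (B x)))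
    (x y : X) : Tendsto (fun T => gp (γ₀ T) y x) atTop (nhds (gpB B x y)) := by
  have h : Tendsto (fun T : ℝ => ((dist x (γ₀ T) - T) + dist y x - (dist y (γ₀ T) - T)) / 2)
      atTop (nhds ((B x + dist y x - B y) / 2)) :=
    (((hlim x).add tendsto_const_nhds).sub (hlim y)).div_const 2
  have he : (fun T : ℝ => ((dist x (γ₀ T) - T) + dist y x - (dist y (γ₀ T) - T)) / 2)
      = fun T => gp (γ₀ T) y x := by
    funext T
    simp only [gp]
    rw [dist_comm (γ₀ T) x, dist_comm (γ₀ T) y]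
    ring
  rw [he] at h
  have : gpB B x y = (B x + dist y x - B y) / 2 := by
    simp only [gpB]; rw [dist_comm y x]; ring
  rw [this]
  exact h

theorem myGp_nonneg (y z x : X) : 0 ≤ gp y z x := by
  have := dist_triangle y x z
  simp only [gp]
  rw [dist_comm x z] at this
  linarith

theorem myGp_le_left (y z x : X) : gp y z x ≤ dist y x := by
  have h := dist_triangle z y x
  simp only [gp]
  rw [dist_comm z y] at h
  linarith

theorem myGp_le_right (y z x : X) : gp y z x ≤ dist z x := by
  have h := dist_triangle y z x
  simp only [gp]
  linarith

end Basics
section Geod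

variable {X : Type*} [MetricSpace X]

theorem myGeod_dist_left {g : ℝ → X} {x y : X} (hg : IsGeodSegment g x y) {t : ℝ}
    (ht : t ∈ Set.Icc 0 (dist x y)) : dist x (g t) = t := by
  have h0 : (0:ℝ) ∈ Set.Icc (0:ℝ) (dist x y) := ⟨le_rfl, dist_nonneg⟩
  have := hg.2.2 0 h0 t ht
  rw [hg.1] at this
  rw [this, abs_of_nonpos (by linarith [ht.1])]
  linarith

theorem myGeod_dist_right {g : ℝ → X} {x y : X} (hg : IsGeodSegment g x y) {t : ℝ}
    (ht : t ∈ Set.Icc 0 (dist x y)) : dist (g t) y = dist x y - t := by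
  have h1 : (dist x y) ∈ Set.Icc (0:ℝ) (dist x y) := ⟨dist_nonneg, le_rfl⟩
  have := hg.2.2 t ht (dist x y) h1
  rw [hg.2.1] at this
  rw [this, abs_of_nonpos (by linarith [ht.2])]
  ring

theorem myGp_comm (y z x : X) : gp y z x = gp z y x := by
  simp only [gp]
  rw [dist_comm y z]
  ring

variable {δ : ℝ}

/-- the S-lemma -/
theorem myS (hδ : 0 ≤ δ) (hgeo : GeodesicMS X) (hhyp : DeltaHyp X δ)
    {g : ℝ → X} {w y : X} (hg : IsGeodSegment g w y) (x : X) {t : ℝ}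
    (ht : t ∈ Set.Icc 0 (dist w y)) (htp : t ≤ gp x y w) :
    dist x (g t) ≤ dist w x - t + 2 * δ := by
  obtain ⟨gwx, hgwx⟩ := hgeo w x
  obtain ⟨gyx, hgyx⟩ := hgeo y x
  obtain ⟨u, hu, hdu⟩ := hhyp w y x g gwx gyx hg hgwx hgyx t ht
  have hwgt : dist w (g t) = t := myGeod_dist_left hg ht
  have hgty : dist (g t) y = dist w y - t := myGeod_dist_right hg ht
  rcases hu with hu | hu
  · obtain ⟨τ, hτ, rfl⟩ := hu
    have h1 : dist w (gwx τ) = τ := myGeod_dist_left hgwx hτ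
    have h2 : dist (gwx τ) x = dist w x - τ := myGeod_dist_right hgwx hτ
    have h3 : dist w (g t) ≤ dist w (gwx τ) + dist (g t) (gwx τ) := by
      have := dist_triangle w (gwx τ) (g t)
      rw [dist_comm (gwx τ) (g t)] at this; linarith
    have h4 : dist x (g t) ≤ dist x (gwx τ) + dist (gwx τ) (g t) := dist_triangle _ _ _
    rw [dist_comm x (gwx τ), dist_comm (gwx τ) (g t)] at h4
    linarith [h4, h2, h1, h3, hwgt, hdu]
  · obtain ⟨τ, hτ, rfl⟩ := hu
    have h1 : dist y (gyx τ) = τ := myGeod_dist_left hgyx hτ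
    have h2 : dist (gyx τ) x = dist y x - τ := myGeod_dist_right hgyx hτ
    have h3 : dist y (g t) ≤ dist y (gyx τ) + dist (g t) (gyx τ) := by
      have := dist_triangle y (gyx τ) (g t)
      rw [dist_comm (gyx τ) (g t)] at this; linarith
    have h4 : dist x (g t) ≤ dist x (gyx τ) + dist (gyx τ) (g t) := dist_triangle _ _ _
    rw [dist_comm x (gyx τ), dist_comm (gyx τ) (g t)] at h4
    have h5 : t ≤ (dist x w + dist y w - dist x y) / 2 := htp
    rw [dist_comm x w, dist_comm y w] at h5
    rw [dist_comm (g t) y] at hgty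
    rw [dist_comm y x] at h2
    linarith [h4, h2, h1, h3, hgty, hdu, h5]

/-- four-point condition -/
theorem myFP (hδ : 0 ≤ δ) (hgeo : GeodesicMS X) (hhyp : DeltaHyp X δ)
    (x y z w : X) : min (gp x y w) (gp y z w) - 2 * δ ≤ gp x z w := by
  set t := min (gp x y w) (gp y z w) with htdef
  have ht0 : 0 ≤ t := le_min (myGp_nonneg _ _ _) (myGp_nonneg _ _ _)
  have htd : t ≤ dist w y := by
    have := myGp_le_right x y w
    rw [dist_comm y w] at this
    exact le_trans (min_le_left _ _) this
  obtain ⟨gwy, hgwy⟩ := hgeo w y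
  have h1 : dist x (gwy t) ≤ dist w x - t + 2 * δ :=
    myS hδ hgeo hhyp hgwy x ⟨ht0, htd⟩ (min_le_left _ _)
  have h2 : dist z (gwy t) ≤ dist w z - t + 2 * δ := by
    refine myS hδ hgeo hhyp hgwy z ⟨ht0, htd⟩ ?_
    rw [myGp_comm z y w]
    exact min_le_right _ _
  have h3 : dist x z ≤ dist x (gwy t) + dist (gwy t) z := dist_triangle _ _ _
  rw [dist_comm (gwy t) z] at h3
  simp only [gp]
  rw [dist_comm x w, dist_comm z w] at *
  linarith

end Geod
section Hyp2

variable {X : Type*} [MetricSpace X] {δ : ℝ}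

/-- limit four-point: Gromov products against the Busemann function -/
theorem myGpB_FP (hδ : 0 ≤ δ) (hgeo : GeodesicMS X) (hhyp : DeltaHyp X δ)
    {B : X → ℝ} (hB : IsBusemann B) (u v x : X) :
    min (gpB B x u) (gpB B x v) - 2 * δ ≤ gp u v x := by
  obtain ⟨γ₀, hray, hlim⟩ := hB
  have h1 := myGp_tendsto hlim x u
  have h2 := myGp_tendsto hlim x v
  have hmin : Tendsto (fun T => min (gp (γ₀ T) u x) (gp (γ₀ T) v x) - 2 * δ) atTop
      (nhds (min (gpB B x u) (gpB B x v) - 2 * δ)) := (h1.min h2).sub tendsto_const_nhds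
  refine le_of_tendsto hmin (Filter.Eventually.of_forall fun T => ?_)
  have := myFP hδ hgeo hhyp u (γ₀ T) v x
  rw [myGp_comm u (γ₀ T) x] at this
  exact this

/-- T-lemma: upper bound for the Busemann function along a geodesic. -/
theorem myT (hδ : 0 ≤ δ) (hgeo : GeodesicMS X) (hhyp : DeltaHyp X δ)
    {B : X → ℝ} (hB : IsBusemann B) {g : ℝ → X} {x y : X} (hg : IsGeodSegment g x y)
    {t : ℝ} (ht : t ∈ Set.Icc 0 (dist x y)) :
    B (g t) ≤ max (B x - t) (B y - (dist x y - t)) + 2 * δ := by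
  obtain ⟨γ₀, hray, hlim⟩ := hB
  have hB' : IsBusemann B := ⟨γ₀, hray, hlim⟩
  have key : ∀ T : ℝ, 0 ≤ T → B (g t) ≤
      max (dist x (γ₀ T) - T - t) (dist y (γ₀ T) - T - (dist x y - t)) + 2 * δ := by
    intro T hT
    obtain ⟨gx, hgx⟩ := hgeo x (γ₀ T)
    obtain ⟨gy, hgy⟩ := hgeo y (γ₀ T)
    obtain ⟨u, hu, hdu⟩ := hhyp x y (γ₀ T) g gx gy hg hgx hgy t ht
    have hxgt : dist x (g t) = t := myGeod_dist_left hg ht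
    have hgty : dist (g t) y = dist x y - t := myGeod_dist_right hg ht
    have hBle : B (g t) - B u ≤ dist (g t) u := myBusemann_sub_le hB' (g t) u
    rcases hu with hu | hu
    · obtain ⟨τ, hτ, rfl⟩ := hu
      have h1 : dist x (gx τ) = τ := myGeod_dist_left hgx hτ
      have h2 : dist (gx τ) (γ₀ T) = dist x (γ₀ T) - τ := myGeod_dist_right hgx hτ
      have h3 : B (gx τ) ≤ dist (gx τ) (γ₀ T) - T := myBusemann_le_ray hray hlim _ hT
      have h4 : dist x (g t) ≤ dist x (gx τ) + dist (g t) (gx τ) := by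
        have := dist_triangle x (gx τ) (g t)
        rw [dist_comm (gx τ) (g t)] at this; linarith
      have : B (g t) ≤ dist x (γ₀ T) - T - t + 2 * δ := by linarith
      exact le_trans this (by
        have := le_max_left (dist x (γ₀ T) - T - t) (dist y (γ₀ T) - T - (dist x y - t))
        linarith)
    · obtain ⟨τ, hτ, rfl⟩ := hu
      have h1 : dist y (gy τ) = τ := myGeod_dist_left hgy hτ
      have h2 : dist (gy τ) (γ₀ T) = dist y (γ₀ T) - τ := myGeod_dist_right hgy hτ
      have h3 : B (gy τ) ≤ dist (gy τ) (γ₀ T) - T := myBusemann_le_ray hray hlim _ hT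
      have h4 : dist (g t) y ≤ dist y (gy τ) + dist (g t) (gy τ) := by
        have := dist_triangle y (gy τ) (g t)
        rw [dist_comm (gy τ) (g t), dist_comm (g t) y] at *; linarith
      have : B (g t) ≤ dist y (γ₀ T) - T - (dist x y - t) + 2 * δ := by linarith
      exact le_trans this (by
        have := le_max_right (dist x (γ₀ T) - T - t) (dist y (γ₀ T) - T - (dist x y - t))
        linarith)
  have hlimM : Tendsto (fun T => max (dist x (γ₀ T) - T - t)
      (dist y (γ₀ T) - T - (dist x y - t)) + 2 * δ) atTop
      (nhds (max (B x - t) (B y - (dist x y - t)) + 2 * δ)) := by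
    exact (((hlim x).sub tendsto_const_nhds).max ((hlim y).sub tendsto_const_nhds)).add
      tendsto_const_nhds
  refine ge_of_tendsto hlimM ?_
  filter_upwards [Filter.eventually_ge_atTop (0:ℝ)] with T hT
  exact key T hT

/-- Facts about B-rays. -/
theorem myBRay_B {B : X → ℝ} {γ : ℝ → X} (hγ : IsBRay B γ) {t : ℝ} (ht : 0 ≤ t) :
    B (γ t) = B (γ 0) - t := hγ.2 t ht

theorem myBRay_dist {B : X → ℝ} {γ : ℝ → X} (hγ : IsBRay B γ) {s t : ℝ}
    (hs : 0 ≤ s) (ht : 0 ≤ t) : dist (γ s) (γ t) = |s - t| := hγ.1 s hs t ht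

theorem myGpB_ray {B : X → ℝ} {γ : ℝ → X} (hγ : IsBRay B γ) {s : ℝ} (hs : 0 ≤ s) :
    gpB B (γ 0) (γ s) = s := by
  have h1 : dist (γ 0) (γ s) = s := by
    rw [myBRay_dist hγ le_rfl hs, abs_of_nonpos (by linarith)]; ring
  simp only [gpB, h1, myBRay_B hγ hs]
  ring

theorem myGpB_sum {B : X → ℝ} (x x' : X) : gpB B x x' + gpB B x' x = dist x x' := by
  simp only [gpB]
  rw [dist_comm x' x]
  ring

/-- push lemma (rays towards the same Busemann point converge). -/
theorem myPush (hδ : 0 ≤ δ) (hgeo : GeodesicMS X) (hhyp : DeltaHyp X δ)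
    {B : X → ℝ} (hB : IsBusemann B) {γ γ' : ℝ → X} (hγ : IsBRay B γ) (hγ' : IsBRay B γ')
    {s s' h : ℝ} (hs : 0 ≤ s) (hs' : 0 ≤ s') (hh : 0 ≤ h)
    (heq : B (γ s) = B (γ' s')) :
    dist (γ (s + h)) (γ' (s' + h)) ≤ dist (γ s) (γ' s') + 4 * δ := by
  have hFP := myGpB_FP hδ hgeo hhyp hB (γ (s + h)) (γ' (s' + h)) (γ' s')
  have hdu' : dist (γ' s') (γ' (s' + h)) = h := by
    rw [myBRay_dist hγ' hs' (by linarith), abs_of_nonpos (by linarith)]; ring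
  have hBu' : B (γ' (s' + h)) = B (γ' s') - h := by
    rw [myBRay_B hγ' (by linarith : (0:ℝ) ≤ s' + h), myBRay_B hγ' hs']; ring
  have hBu : B (γ (s + h)) = B (γ s) - h := by
    rw [myBRay_B hγ (by linarith : (0:ℝ) ≤ s + h), myBRay_B hγ hs]; ring
  have hgpB2 : gpB B (γ' s') (γ' (s' + h)) = h := by
    simp only [gpB, hdu', hBu']; ring
  have hdge : B (γ' s') - B (γ (s + h)) ≤ dist (γ' s') (γ (s + h)) :=
    myBusemann_sub_le hB _ _
  have hgpB1 : h ≤ gpB B (γ' s') (γ (s + h)) := by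
    simp only [gpB]
    rw [hBu, ← heq]
    linarith
  have hmin : h - 2 * δ ≤ gp (γ (s + h)) (γ' (s' + h)) (γ' s') := by
    refine le_trans ?_ hFP
    rw [hgpB2]
    have := le_min hgpB1 (le_refl h)
    simp only [ge_iff_le, le_min_iff] at this
    have : h ≤ min (gpB B (γ' s') (γ (s + h))) h := le_min hgpB1 le_rfl
    linarith
  have hid : dist (γ (s + h)) (γ' (s' + h)) =
      dist (γ (s + h)) (γ' s') + dist (γ' (s' + h)) (γ' s') - 2 * gp (γ (s + h)) (γ' (s' + h)) (γ' s') := by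
    simp only [gp]; ring
  have htri : dist (γ (s + h)) (γ' s') ≤ h + dist (γ s) (γ' s') := by
    have h1 := dist_triangle (γ (s + h)) (γ s) (γ' s')
    have h2 : dist (γ (s + h)) (γ s) = h := by
      rw [myBRay_dist hγ (by linarith) hs, abs_of_nonneg (by linarith)]; ring
    linarith
  have hsymm : dist (γ' (s' + h)) (γ' s') = h := by rw [dist_comm]; exact hdu'
  rw [hid, hsymm]
  linarith

/-- corner lemma: the points at depth `a` resp. `b` on the two rays are `8δ`-close. -/
theorem myCorner (hδ : 0 ≤ δ) (hgeo : GeodesicMS X) (hhyp : DeltaHyp X δ)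
    {B : X → ℝ} (hB : IsBusemann B) {γ γ' : ℝ → X} (hγ : IsBRay B γ) (hγ' : IsBRay B γ') :
    dist (γ (gpB B (γ 0) (γ' 0))) (γ' (gpB B (γ' 0) (γ 0))) ≤ 8 * δ := by
  set A := gpB B (γ 0) (γ' 0) with hA
  set Bb := gpB B (γ' 0) (γ 0) with hBb
  have hlip1 : B (γ' 0) - B (γ 0) ≤ dist (γ' 0) (γ 0) := myBusemann_sub_le hB _ _
  have hlip2 : B (γ 0) - B (γ' 0) ≤ dist (γ 0) (γ' 0) := myBusemann_sub_le hB _ _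
  have hA0 : 0 ≤ A := by
    rw [hA]; simp only [gpB]
    rw [dist_comm (γ' 0) (γ 0)] at hlip1
    linarith
  have hBb0 : 0 ≤ Bb := by
    rw [hBb]; simp only [gpB]
    rw [dist_comm (γ' 0) (γ 0)]
    linarith
  have hsum : A + Bb = dist (γ 0) (γ' 0) := myGpB_sum _ _
  -- Step 1 : dist (γ 0) (γ' Bb) ≤ A + 4δ
  have hgpB_x'x : gpB B (γ' 0) (γ' Bb) = Bb := myGpB_ray hγ' hBb0
  have hFP1 := myGpB_FP hδ hgeo hhyp hB (γ 0) (γ' Bb) (γ' 0)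
  rw [hgpB_x'x, ← hBb, min_self] at hFP1
  have hd2 : dist (γ' Bb) (γ' 0) = Bb := by
    rw [myBRay_dist hγ' hBb0 le_rfl, abs_of_nonneg (by linarith)]; ring
  have hD : dist (γ 0) (γ' Bb) ≤ A + 4 * δ := by
    have hidgp : gp (γ 0) (γ' Bb) (γ' 0)
        = (dist (γ 0) (γ' 0) + dist (γ' Bb) (γ' 0) - dist (γ 0) (γ' Bb)) / 2 := rfl
    rw [hidgp, hd2] at hFP1
    linarith
  -- Step 2 : A ≤ dist (γ 0) (γ' Bb)
  have hBγ'Bb : B (γ' Bb) = B (γ' 0) - Bb := myBRay_B hγ' hBb0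
  have hBdiff : B (γ 0) - B (γ' Bb) = A := by
    rw [hBγ'Bb, hA, hBb]
    simp only [gpB]
    rw [dist_comm (γ' 0) (γ 0)]
    ring
  have hDge : A ≤ dist (γ 0) (γ' Bb) := by
    have := myBusemann_sub_le hB (γ 0) (γ' Bb)
    linarith
  -- Step 3 : conclude
  have hgpB_xA : gpB B (γ 0) (γ A) = A := myGpB_ray hγ hA0
  have hgpB_xv : A ≤ gpB B (γ 0) (γ' Bb) := by
    simp only [gpB]
    linarith
  have hFP2 := myGpB_FP hδ hgeo hhyp hB (γ A) (γ' Bb) (γ 0)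
  rw [hgpB_xA] at hFP2
  have hmin2 : A - 2 * δ ≤ gp (γ A) (γ' Bb) (γ 0) := by
    have hmm : A ≤ min A (gpB B (γ 0) (γ' Bb)) := le_min le_rfl hgpB_xv
    linarith
  have hdA : dist (γ A) (γ 0) = A := by
    rw [myBRay_dist hγ hA0 le_rfl, abs_of_nonneg (by linarith)]; ring
  have hid : dist (γ A) (γ' Bb) =
      dist (γ A) (γ 0) + dist (γ' Bb) (γ 0) - 2 * gp (γ A) (γ' Bb) (γ 0) := by
    simp only [gp]; ring
  rw [hid, hdA, dist_comm (γ' Bb) (γ 0)]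
  linarith

end Hyp2
section Infra

variable {X : Type*} [MetricSpace X]

/-- variation of a Lipschitz-type function on an interval. -/
theorem myLipEvar {f : ℝ → X} {K u v : ℝ} (hK : 0 ≤ K) (huv : u ≤ v)
    (hf : ∀ s ∈ Set.Icc u v, ∀ t ∈ Set.Icc u v, dist (f s) (f t) ≤ K * |s - t|) :
    eVariationOn f (Set.Icc u v) ≤ ENNReal.ofReal (K * (v - u)) := by
  apply iSup_le
  rintro ⟨n, ⟨pu, hmono, hmem⟩⟩
  have step : ∀ i : ℕ, edist (f (pu (i + 1))) (f (pu i)) ≤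
      ENNReal.ofReal (K * pu (i + 1) - K * pu i) := by
    intro i
    rw [edist_dist]
    apply ENNReal.ofReal_le_ofReal
    have h1 := hf (pu (i + 1)) (hmem (i + 1)) (pu i) (hmem i)
    have h2 : |pu (i + 1) - pu i| = pu (i + 1) - pu i := by
      rw [abs_of_nonneg]
      have := hmono (Nat.le_succ i)
      linarith
    rw [h2] at h1
    rw [dist_comm] at h1
    calc dist (f (pu (i+1))) (f (pu i)) ≤ K * (pu (i + 1) - pu i) := by
          rw [dist_comm]; exact h1
      _ = K * pu (i + 1) - K * pu i := by ring
  calc ∑ i ∈ Finset.range n, edist (f (pu (i + 1))) (f (pu i))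
      ≤ ∑ i ∈ Finset.range n, ENNReal.ofReal (K * pu (i + 1) - K * pu i) :=
        Finset.sum_le_sum fun i _ => step i
    _ = ENNReal.ofReal (∑ i ∈ Finset.range n, (K * pu (i + 1) - K * pu i)) := by
        rw [ENNReal.ofReal_sum_of_nonneg]
        intro i _
        have := hmono (Nat.le_succ i)
        nlinarith
    _ = ENNReal.ofReal (K * pu n - K * pu 0) := by
        rw [Finset.sum_range_sub (fun i => K * pu i)]
    _ ≤ ENNReal.ofReal (K * (v - u)) := by
        apply ENNReal.ofReal_le_ofReal
        have h0 : u ≤ pu 0 := (hmem 0).1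
        have hn : pu n ≤ v := (hmem n).2
        have hmul1 : K * pu n ≤ K * v := by nlinarith
        have hmul2 : K * u ≤ K * pu 0 := by nlinarith
        linarith

theorem myEdist_le_intDist {Z : Type*} [MetricSpace Z] (p q : Z) :
    edist p q ≤ intDist p q := by
  refine le_iInf fun c => le_iInf fun hc => le_iInf fun h0 => le_iInf fun h1 => ?_
  rw [← h0, ← h1]
  exact eVariationOn.edist_le c ⟨le_rfl, zero_le_one⟩ ⟨zero_le_one, le_rfl⟩

theorem myIntDist_le {Z : Type*} [MetricSpace Z] {p q : Z} {c : ℝ → Z}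
    (hc : ContinuousOn c (Set.Icc 0 1)) (h0 : c 0 = p) (h1 : c 1 = q) :
    intDist p q ≤ eVariationOn c (Set.Icc (0:ℝ) 1) := by
  exact iInf_le_of_le c (iInf_le_of_le hc (iInf_le_of_le h0 (iInf_le_of_le h1 le_rfl)))

theorem myDist_le_of_intDist {Z : Type*} [MetricSpace Z] {p q : Z} {r : ℝ}
    (hr : 0 ≤ r) (h : intDist p q = ENNReal.ofReal r) : dist p q ≤ r := by
  have := myEdist_le_intDist p q
  rw [h, edist_dist] at this
  exact (ENNReal.ofReal_le_ofReal_iff hr).1 this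

end Infra
section Path

theorem myRayClamp_dist {X : Type*} [MetricSpace X] {γ : ℝ → X} (h : IsRay γ) (v w : ℝ) :
    dist (γ (max v 0)) (γ (max w 0)) ≤ |v - w| := by
  rw [h (max v 0) (Set.mem_Ici.2 (le_max_right _ _)) (max w 0) (Set.mem_Ici.2 (le_max_right _ _))]
  have := abs_max_sub_max_le_abs v w 0
  exact this

theorem myGeodClamp_dist {X : Type*} [MetricSpace X] {c : ℝ → X} {x y : X}
    (h : IsGeodSegment c x y) (v w : ℝ) :
    dist (c (min (max v 0) (dist x y))) (c (min (max w 0) (dist x y))) ≤ |v - w| := by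
  have hv : min (max v 0) (dist x y) ∈ Set.Icc 0 (dist x y) :=
    ⟨le_min (le_max_right _ _) dist_nonneg, min_le_right _ _⟩
  have hw : min (max w 0) (dist x y) ∈ Set.Icc 0 (dist x y) :=
    ⟨le_min (le_max_right _ _) dist_nonneg, min_le_right _ _⟩
  rw [h.2.2 _ hv _ hw]
  have h1 : |min (max v 0) (dist x y) - min (max w 0) (dist x y)| ≤ |max v 0 - max w 0| := by
    refine (abs_min_sub_min_le_max (max v 0) (dist x y) (max w 0) (dist x y)).trans ?_
    rw [sub_self, abs_zero]
    exact max_le le_rfl (abs_nonneg _)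
  have h2 : |max v 0 - max w 0| ≤ |v - w| := abs_max_sub_max_le_abs v w 0
  exact le_trans h1 h2

end Path

section PathMain

variable {X₁ X₂ : Type*} [MetricSpace X₁] [MetricSpace X₂]

/-- distance in the fibered product. -/
theorem mySubDist {B₁ : X₁ → ℝ} {B₂ : X₂ → ℝ} (x y : {q : X₁ × X₂ // B₁ q.1 = B₂ q.2}) :
    dist x y = max (dist x.1.1 y.1.1) (dist x.1.2 y.1.2) := by
  rw [Subtype.dist_eq, Prod.dist_eq]

/-- The combined path bound. -/
theorem myPathBound {B₁ : X₁ → ℝ} {B₂ : X₂ → ℝ}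
    (hB₁ : IsBusemann B₁) (hB₂ : IsBusemann B₂)
    {γ₁ γ₁' : ℝ → X₁} {γ₂ γ₂' : ℝ → X₂}
    (hγ₁ : IsBRay B₁ γ₁) (hγ₁' : IsBRay B₁ γ₁')
    (hγ₂ : IsBRay B₂ γ₂) (hγ₂' : IsBRay B₂ γ₂')
    {a b s : ℝ} (ha0 : 0 ≤ a) (hb0 : 0 ≤ b) (hs0 : 0 ≤ s)
    (hB10 : B₁ (γ₁ 0) = 0) (hB20 : B₂ (γ₂ 0) = 0)
    (hB1' : B₁ (γ₁' 0) = b - a) (hB2' : B₂ (γ₂' 0) = b - a)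
    {c₁ : ℝ → X₁} (hc₁ : IsGeodSegment c₁ (γ₁ (a+s)) (γ₁' (b+s)))
    {c₂ : ℝ → X₂} (hc₂ : IsGeodSegment c₂ (γ₂ (a+s)) (γ₂' (b+s)))
    (hcond1 : dist (γ₁ (a+s)) (γ₁' (b+s)) ≤ 2*(a+s))
    (hcond2 : dist (γ₂ (a+s)) (γ₂' (b+s)) ≤ 2*(b+s))
    (p p' : {q : X₁ × X₂ // B₁ q.1 = B₂ q.2})
    (hp : p.1 = (γ₁ 0, γ₂ 0)) (hp' : p'.1 = (γ₁' 0, γ₂' 0)) :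
    intDist p p' ≤ ENNReal.ofReal
      ((a+s) + dist (γ₁ (a+s)) (γ₁' (b+s)) + dist (γ₂ (a+s)) (γ₂' (b+s)) + (b+s)) := by
  set A1 := a + s with hA1
  set Bs := b + s with hBs
  set R₁ := dist (γ₁ A1) (γ₁' Bs) with hR₁
  set R₂ := dist (γ₂ A1) (γ₂' Bs) with hR₂
  have hA10 : 0 ≤ A1 := by positivity
  have hBs0 : 0 ≤ Bs := by positivity
  have hR₁0 : 0 ≤ R₁ := dist_nonneg
  have hR₂0 : 0 ≤ R₂ := dist_nonneg
  -- B-values along rays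
  have hBγ₁ : ∀ v : ℝ, B₁ (γ₁ (max v 0)) = -(max v 0) := by
    intro v; rw [myBRay_B hγ₁ (le_max_right _ _), hB10]; ring
  have hBγ₂ : ∀ v : ℝ, B₂ (γ₂ (max v 0)) = -(max v 0) := by
    intro v; rw [myBRay_B hγ₂ (le_max_right _ _), hB20]; ring
  have hBγ₁' : ∀ v : ℝ, B₁ (γ₁' (max v 0)) = (b - a) - max v 0 := by
    intro v; rw [myBRay_B hγ₁' (le_max_right _ _), hB1']
  have hBγ₂' : ∀ v : ℝ, B₂ (γ₂' (max v 0)) = (b - a) - max v 0 := by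
    intro v; rw [myBRay_B hγ₂' (le_max_right _ _), hB2']
  -- B-values at the transfer endpoints
  have hBγ₁A1 : B₁ (γ₁ A1) = -A1 := by
    have := hBγ₁ A1; rwa [max_eq_left hA10] at this
  have hBγ₂A1 : B₂ (γ₂ A1) = -A1 := by
    have := hBγ₂ A1; rwa [max_eq_left hA10] at this
  have hBγ₁'Bs : B₁ (γ₁' Bs) = -A1 := by
    have := hBγ₁' Bs; rw [max_eq_left hBs0] at this; rw [this, hBs, hA1]; ring
  have hBγ₂'Bs : B₂ (γ₂' Bs) = -A1 := by
    have := hBγ₂' Bs; rw [max_eq_left hBs0] at this; rw [this, hBs, hA1]; ring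
  -- clamped transfer geodesics
  set C₁ : ℝ → X₁ := fun v => c₁ (min (max v 0) R₁) with hC₁
  set C₂ : ℝ → X₂ := fun v => c₂ (min (max v 0) R₂) with hC₂
  have hC₁mem : ∀ v : ℝ, min (max v 0) R₁ ∈ Set.Icc 0 R₁ := fun v =>
    ⟨le_min (le_max_right _ _) hR₁0, min_le_right _ _⟩
  have hC₂mem : ∀ v : ℝ, min (max v 0) R₂ ∈ Set.Icc 0 R₂ := fun v =>
    ⟨le_min (le_max_right _ _) hR₂0, min_le_right _ _⟩
  -- B along the transfer geodesics
  have hBC₁ : ∀ v : ℝ, B₁ (C₁ v) ≤ 0 := by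
    intro v
    set u := min (max v 0) R₁ with hu
    have hum := hC₁mem v
    have h1 : dist (γ₁ A1) (c₁ u) = u := myGeod_dist_left hc₁ hum
    have h2 : dist (c₁ u) (γ₁' Bs) = R₁ - u := myGeod_dist_right hc₁ hum
    have hl1 : B₁ (c₁ u) - B₁ (γ₁ A1) ≤ dist (c₁ u) (γ₁ A1) := myBusemann_sub_le hB₁ _ _
    have hl2 : B₁ (c₁ u) - B₁ (γ₁' Bs) ≤ dist (c₁ u) (γ₁' Bs) := myBusemann_sub_le hB₁ _ _
    rw [dist_comm] at hl1
    rw [hBγ₁A1, h1] at hl1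
    rw [hBγ₁'Bs, h2] at hl2
    have : u ≤ A1 ∨ R₁ - u ≤ A1 := by
      rcases le_total u (R₁/2) with h | h
      · left; linarith
      · right; linarith
    rcases this with h | h
    · show B₁ (c₁ u) ≤ 0; linarith
    · show B₁ (c₁ u) ≤ 0; linarith
  have hBC₂ : ∀ v : ℝ, B₂ (C₂ v) ≤ b - a := by
    intro v
    set u := min (max v 0) R₂ with hu
    have hum := hC₂mem v
    have h1 : dist (γ₂ A1) (c₂ u) = u := myGeod_dist_left hc₂ hum
    have h2 : dist (c₂ u) (γ₂' Bs) = R₂ - u := myGeod_dist_right hc₂ hum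
    have hl1 : B₂ (c₂ u) - B₂ (γ₂ A1) ≤ dist (c₂ u) (γ₂ A1) := myBusemann_sub_le hB₂ _ _
    have hl2 : B₂ (c₂ u) - B₂ (γ₂' Bs) ≤ dist (c₂ u) (γ₂' Bs) := myBusemann_sub_le hB₂ _ _
    rw [dist_comm] at hl1
    rw [hBγ₂A1, h1] at hl1
    rw [hBγ₂'Bs, h2] at hl2
    have : u ≤ Bs ∨ R₂ - u ≤ Bs := by
      rcases le_total u (R₂/2) with h | h
      · left; linarith
      · right; linarith
    rcases this with h | h
    · show B₂ (c₂ u) ≤ b - a; rw [hBs] at h; rw [hA1] at hl1; linarith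
    · show B₂ (c₂ u) ≤ b - a; rw [hBs] at h; rw [hA1] at hl2; linarith
  -- the four legs as maps into Y
  set m1 : ℝ → ℝ := fun t => min (4*A1*t) A1 with hm1
  set m2 : ℝ → ℝ := fun t => 4*R₁*(t - 4⁻¹) with hm2
  set m3 : ℝ → ℝ := fun t => 4*R₂*(t - 2⁻¹) with hm3
  set m4 : ℝ → ℝ := fun t => min (Bs - 4*Bs*(t - 3/4)) Bs with hm4
  set Leg1 : ℝ → {q : X₁ × X₂ // B₁ q.1 = B₂ q.2} := fun t =>
    ⟨(γ₁ (max (m1 t) 0), γ₂ (max (m1 t) 0)), by rw [hBγ₁, hBγ₂]⟩ with hLeg1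
  set Leg2 : ℝ → {q : X₁ × X₂ // B₁ q.1 = B₂ q.2} := fun t =>
    ⟨(C₁ (m2 t), γ₂ (max (-(B₁ (C₁ (m2 t)))) 0)), by
      rw [hBγ₂, max_eq_left (by linarith [hBC₁ (m2 t)] : (0:ℝ) ≤ -(B₁ (C₁ (m2 t))))]
      ring⟩ with hLeg2
  set Leg3 : ℝ → {q : X₁ × X₂ // B₁ q.1 = B₂ q.2} := fun t =>
    ⟨(γ₁' (max ((b-a) - B₂ (C₂ (m3 t))) 0), C₂ (m3 t)), by
      rw [hBγ₁', max_eq_left (by linarith [hBC₂ (m3 t)] : (0:ℝ) ≤ (b-a) - B₂ (C₂ (m3 t)))]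
      ring⟩ with hLeg3
  set Leg4 : ℝ → {q : X₁ × X₂ // B₁ q.1 = B₂ q.2} := fun t =>
    ⟨(γ₁' (max (m4 t) 0), γ₂' (max (m4 t) 0)), by rw [hBγ₁', hBγ₂']⟩ with hLeg4
  -- Lipschitz bounds on the legs
  have hm1lip : ∀ t t' : ℝ, |m1 t - m1 t'| ≤ 4*A1*|t - t'| := by
    intro t t'
    have h := abs_min_sub_min_le_max (4*A1*t) A1 (4*A1*t') A1
    rw [sub_self, abs_zero] at h
    refine le_trans h (max_le ?_ (by positivity))
    rw [show 4*A1*t - 4*A1*t' = 4*A1*(t - t') by ring, abs_mul,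
      abs_of_nonneg (by positivity : (0:ℝ) ≤ 4*A1)]
  have hm4lip : ∀ t t' : ℝ, |m4 t - m4 t'| ≤ 4*Bs*|t - t'| := by
    intro t t'
    have h := abs_min_sub_min_le_max (Bs - 4*Bs*(t - 3/4)) Bs (Bs - 4*Bs*(t' - 3/4)) Bs
    rw [sub_self, abs_zero] at h
    refine le_trans h (max_le ?_ (by positivity))
    rw [show Bs - 4*Bs*(t - 3/4) - (Bs - 4*Bs*(t' - 3/4)) = 4*Bs*(t' - t) by ring, abs_mul,
      abs_of_nonneg (by positivity : (0:ℝ) ≤ 4*Bs), abs_sub_comm t' t]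
  have hm2lip : ∀ t t' : ℝ, |m2 t - m2 t'| = 4*R₁*|t - t'| := by
    intro t t'
    rw [hm2]
    rw [show 4*R₁*(t - 4⁻¹) - 4*R₁*(t' - 4⁻¹) = 4*R₁*(t - t') by ring, abs_mul,
      abs_of_nonneg (by positivity : (0:ℝ) ≤ 4*R₁)]
  have hm3lip : ∀ t t' : ℝ, |m3 t - m3 t'| = 4*R₂*|t - t'| := by
    intro t t'
    rw [hm3]
    rw [show 4*R₂*(t - 2⁻¹) - 4*R₂*(t' - 2⁻¹) = 4*R₂*(t - t') by ring, abs_mul,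
      abs_of_nonneg (by positivity : (0:ℝ) ≤ 4*R₂)]
  have hd1 : ∀ t t' : ℝ, dist (Leg1 t) (Leg1 t') ≤ 4*A1*|t - t'| := by
    intro t t'
    rw [mySubDist]
    exact max_le (le_trans (myRayClamp_dist hγ₁.1 _ _) (hm1lip t t'))
      (le_trans (myRayClamp_dist hγ₂.1 _ _) (hm1lip t t'))
  have hC₁dist : ∀ v w : ℝ, dist (C₁ v) (C₁ w) ≤ |v - w| := by
    intro v w
    have := myGeodClamp_dist hc₁ v w
    rw [← hR₁] at this
    exact this
  have hC₂dist : ∀ v w : ℝ, dist (C₂ v) (C₂ w) ≤ |v - w| := by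
    intro v w
    have := myGeodClamp_dist hc₂ v w
    rw [← hR₂] at this
    exact this
  have hd2 : ∀ t t' : ℝ, dist (Leg2 t) (Leg2 t') ≤ 4*R₁*|t - t'| := by
    intro t t'
    rw [mySubDist]
    refine max_le (le_trans (hC₁dist _ _) (le_of_eq (hm2lip t t'))) ?_
    refine le_trans (myRayClamp_dist hγ₂.1 _ _) ?_
    have h1 : |-(B₁ (C₁ (m2 t))) - -(B₁ (C₁ (m2 t')))| = |B₁ (C₁ (m2 t)) - B₁ (C₁ (m2 t'))| := by
      rw [← abs_neg]; ring_nf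
    rw [h1]
    refine le_trans (myBusemann_lip hB₁ _ _) ?_
    exact le_trans (hC₁dist _ _) (le_of_eq (hm2lip t t'))
  have hd3 : ∀ t t' : ℝ, dist (Leg3 t) (Leg3 t') ≤ 4*R₂*|t - t'| := by
    intro t t'
    rw [mySubDist]
    refine max_le ?_ (le_trans (hC₂dist _ _) (le_of_eq (hm3lip t t')))
    refine le_trans (myRayClamp_dist hγ₁'.1 _ _) ?_
    have h1 : |((b-a) - B₂ (C₂ (m3 t))) - ((b-a) - B₂ (C₂ (m3 t')))|
        = |B₂ (C₂ (m3 t')) - B₂ (C₂ (m3 t))| := by ring_nf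
    rw [h1]
    refine le_trans (myBusemann_lip hB₂ _ _) ?_
    refine le_trans (hC₂dist _ _) (le_of_eq ?_)
    rw [abs_sub_comm (m3 t') (m3 t), hm3lip t t']
  have hd4 : ∀ t t' : ℝ, dist (Leg4 t) (Leg4 t') ≤ 4*Bs*|t - t'| := by
    intro t t'
    rw [mySubDist]
    exact max_le (le_trans (myRayClamp_dist hγ₁'.1 _ _) (hm4lip t t'))
      (le_trans (myRayClamp_dist hγ₂'.1 _ _) (hm4lip t t'))
  -- values at the junctions
  have hm10 : m1 0 = 0 := by show min (4*A1*0) A1 = 0; rw [mul_zero, min_eq_left hA10]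
  have hm1q : m1 4⁻¹ = A1 := by
    show min (4*A1*4⁻¹) A1 = A1; rw [show 4*A1*4⁻¹ = A1 by ring, min_self]
  have hm2q0 : m2 4⁻¹ = 0 := by show 4*R₁*((4:ℝ)⁻¹ - 4⁻¹) = 0; ring
  have hm2q1 : m2 2⁻¹ = R₁ := by show 4*R₁*((2:ℝ)⁻¹ - 4⁻¹) = R₁; ring
  have hm3q0 : m3 2⁻¹ = 0 := by show 4*R₂*((2:ℝ)⁻¹ - 2⁻¹) = 0; ring
  have hm3q1 : m3 (3/4) = R₂ := by show 4*R₂*((3:ℝ)/4 - 2⁻¹) = R₂; ring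
  have hm4q0 : m4 (3/4) = Bs := by
    show min (Bs - 4*Bs*((3:ℝ)/4 - 3/4)) Bs = Bs
    rw [show Bs - 4*Bs*((3:ℝ)/4 - 3/4) = Bs by ring, min_self]
  have hm41 : m4 1 = 0 := by
    show min (Bs - 4*Bs*((1:ℝ) - 3/4)) Bs = 0
    rw [show Bs - 4*Bs*((1:ℝ) - 3/4) = 0 by ring, min_eq_left hBs0]
  have hC₁0 : C₁ 0 = γ₁ A1 := by
    show c₁ (max (0:ℝ) 0 ⊓ R₁) = γ₁ A1
    rw [max_self, min_eq_left hR₁0]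
    exact hc₁.1
  have hC₁R : C₁ R₁ = γ₁' Bs := by
    show c₁ (max R₁ 0 ⊓ R₁) = γ₁' Bs
    rw [max_eq_left hR₁0, min_self, hR₁]
    exact hc₁.2.1
  have hC₂0 : C₂ 0 = γ₂ A1 := by
    show c₂ (max (0:ℝ) 0 ⊓ R₂) = γ₂ A1
    rw [max_self, min_eq_left hR₂0]
    exact hc₂.1
  have hC₂R : C₂ R₂ = γ₂' Bs := by
    show c₂ (max R₂ 0 ⊓ R₂) = γ₂' Bs
    rw [max_eq_left hR₂0, min_self, hR₂]
    exact hc₂.2.1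
  have hn0 : Leg1 0 = p := by
    apply Subtype.ext
    rw [hp]
    show (γ₁ (max (m1 0) 0), γ₂ (max (m1 0) 0)) = (γ₁ 0, γ₂ 0)
    rw [hm10, max_self]
  have hq1 : Leg1 4⁻¹ = Leg2 4⁻¹ := by
    apply Subtype.ext
    show (γ₁ (max (m1 4⁻¹) 0), γ₂ (max (m1 4⁻¹) 0))
      = (C₁ (m2 4⁻¹), γ₂ (max (-(B₁ (C₁ (m2 4⁻¹)))) 0))
    rw [hm1q, hm2q0, hC₁0, hBγ₁A1, neg_neg, max_eq_left hA10]
  have hq2 : Leg2 2⁻¹ = Leg3 2⁻¹ := by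
    apply Subtype.ext
    show (C₁ (m2 2⁻¹), γ₂ (max (-(B₁ (C₁ (m2 2⁻¹)))) 0))
      = (γ₁' (max ((b-a) - B₂ (C₂ (m3 2⁻¹))) 0), C₂ (m3 2⁻¹))
    rw [hm2q1, hm3q0, hC₁R, hC₂0, hBγ₁'Bs, hBγ₂A1, neg_neg]
    have h1 : (b-a) - (-A1) = Bs := by rw [hA1, hBs]; ring
    rw [h1, max_eq_left hBs0, max_eq_left hA10]
  have hq3 : Leg3 (3/4) = Leg4 (3/4) := by
    apply Subtype.ext
    show (γ₁' (max ((b-a) - B₂ (C₂ (m3 (3/4)))) 0), C₂ (m3 (3/4)))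
      = (γ₁' (max (m4 (3/4)) 0), γ₂' (max (m4 (3/4)) 0))
    rw [hm3q1, hm4q0, hC₂R, hBγ₂'Bs]
    have h1 : (b-a) - (-A1) = Bs := by rw [hA1, hBs]; ring
    rw [h1, max_eq_left hBs0]
  have hn1 : Leg4 1 = p' := by
    apply Subtype.ext
    rw [hp']
    show (γ₁' (max (m4 1) 0), γ₂' (max (m4 1) 0)) = (γ₁' 0, γ₂' 0)
    rw [hm41, max_self]
  -- continuity of the legs
  have hcont1 : Continuous Leg1 := by
    refine (LipschitzWith.of_dist_le_mul (K := (4*A1).toNNReal) fun x y => ?_).continuous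
    rw [Real.dist_eq, Real.coe_toNNReal _ (by positivity)]
    exact hd1 x y
  have hcont2 : Continuous Leg2 := by
    refine (LipschitzWith.of_dist_le_mul (K := (4*R₁).toNNReal) fun x y => ?_).continuous
    rw [Real.dist_eq, Real.coe_toNNReal _ (by positivity)]
    exact hd2 x y
  have hcont3 : Continuous Leg3 := by
    refine (LipschitzWith.of_dist_le_mul (K := (4*R₂).toNNReal) fun x y => ?_).continuous
    rw [Real.dist_eq, Real.coe_toNNReal _ (by positivity)]
    exact hd3 x y
  have hcont4 : Continuous Leg4 := by
    refine (LipschitzWith.of_dist_le_mul (K := (4*Bs).toNNReal) fun x y => ?_).continuous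
    rw [Real.dist_eq, Real.coe_toNNReal _ (by positivity)]
    exact hd4 x y
  -- glue
  set rest2 : ℝ → {q : X₁ × X₂ // B₁ q.1 = B₂ q.2} :=
    fun t => if t ≤ (3/4:ℝ) then Leg3 t else Leg4 t with hrest2
  set rest : ℝ → {q : X₁ × X₂ // B₁ q.1 = B₂ q.2} :=
    fun t => if t ≤ (2⁻¹:ℝ) then Leg2 t else rest2 t with hrest
  set cc : ℝ → {q : X₁ × X₂ // B₁ q.1 = B₂ q.2} :=
    fun t => if t ≤ (4⁻¹:ℝ) then Leg1 t else rest t with hccdef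
  have hcontr2 : Continuous rest2 :=
    Continuous.if_le hcont3 hcont4 continuous_id continuous_const
      (fun x hx => by rw [show x = (3/4:ℝ) from hx]; exact hq3)
  have hcontr : Continuous rest := by
    refine Continuous.if_le hcont2 hcontr2 continuous_id continuous_const
      (fun x hx => ?_)
    rw [show x = (2⁻¹:ℝ) from hx]
    show Leg2 2⁻¹ = if (2⁻¹:ℝ) ≤ (3/4:ℝ) then Leg3 2⁻¹ else Leg4 2⁻¹
    rw [if_pos (by norm_num)]
    exact hq2
  have hcontc : Continuous cc := by
    refine Continuous.if_le hcont1 hcontr continuous_id continuous_const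
      (fun x hx => ?_)
    rw [show x = (4⁻¹:ℝ) from hx]
    show Leg1 4⁻¹ = if (4⁻¹:ℝ) ≤ (2⁻¹:ℝ) then Leg2 4⁻¹ else rest2 4⁻¹
    rw [if_pos (by norm_num)]
    exact hq1
  have hcc0 : cc 0 = p := by
    show (if (0:ℝ) ≤ (4⁻¹:ℝ) then Leg1 0 else rest 0) = p
    rw [if_pos (by norm_num)]
    exact hn0
  have hcc1 : cc 1 = p' := by
    show (if (1:ℝ) ≤ (4⁻¹:ℝ) then Leg1 1 else rest 1) = p'
    rw [if_neg (by norm_num)]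
    show (if (1:ℝ) ≤ (2⁻¹:ℝ) then Leg2 1 else rest2 1) = p'
    rw [if_neg (by norm_num)]
    show (if (1:ℝ) ≤ (3/4:ℝ) then Leg3 1 else Leg4 1) = p'
    rw [if_neg (by norm_num)]
    exact hn1
  -- eqons
  have hE1 : Set.EqOn cc Leg1 (Set.Icc 0 4⁻¹) := by
    intro t ht
    show (if t ≤ (4⁻¹:ℝ) then Leg1 t else rest t) = Leg1 t
    rw [if_pos ht.2]
  have hE2 : Set.EqOn cc Leg2 (Set.Icc 4⁻¹ 2⁻¹) := by
    intro t ht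
    show (if t ≤ (4⁻¹:ℝ) then Leg1 t else rest t) = Leg2 t
    by_cases h : t ≤ (4⁻¹:ℝ)
    · have ht4 : t = 4⁻¹ := le_antisymm h ht.1
      rw [if_pos h, ht4, hq1]
    · rw [if_neg h]
      show (if t ≤ (2⁻¹:ℝ) then Leg2 t else rest2 t) = Leg2 t
      rw [if_pos ht.2]
  have hE3 : Set.EqOn cc Leg3 (Set.Icc 2⁻¹ (3/4)) := by
    intro t ht
    show (if t ≤ (4⁻¹:ℝ) then Leg1 t else rest t) = Leg3 t
    have h4 : ¬ t ≤ (4⁻¹:ℝ) := by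
      have := ht.1; intro hcon; norm_num at this hcon; linarith
    rw [if_neg h4]
    show (if t ≤ (2⁻¹:ℝ) then Leg2 t else rest2 t) = Leg3 t
    by_cases h : t ≤ (2⁻¹:ℝ)
    · have ht2 : t = 2⁻¹ := le_antisymm h ht.1
      rw [if_pos h, ht2, hq2]
    · rw [if_neg h]
      show (if t ≤ (3/4:ℝ) then Leg3 t else Leg4 t) = Leg3 t
      rw [if_pos ht.2]
  have hE4 : Set.EqOn cc Leg4 (Set.Icc (3/4) 1) := by
    intro t ht
    show (if t ≤ (4⁻¹:ℝ) then Leg1 t else rest t) = Leg4 t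
    have h4 : ¬ t ≤ (4⁻¹:ℝ) := by
      have := ht.1; intro hcon; norm_num at this hcon; linarith
    rw [if_neg h4]
    show (if t ≤ (2⁻¹:ℝ) then Leg2 t else rest2 t) = Leg4 t
    have h2 : ¬ t ≤ (2⁻¹:ℝ) := by
      have := ht.1; intro hcon; norm_num at this hcon; linarith
    rw [if_neg h2]
    show (if t ≤ (3/4:ℝ) then Leg3 t else Leg4 t) = Leg4 t
    by_cases h : t ≤ (3/4:ℝ)
    · have ht3 : t = 3/4 := le_antisymm h ht.1
      rw [if_pos h, ht3, hq3]
    · rw [if_neg h]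
  -- variation bounds on the pieces
  have hv1 : eVariationOn cc (Set.Icc 0 4⁻¹) ≤ ENNReal.ofReal A1 := by
    rw [eVariationOn.eq_of_eqOn hE1]
    have := myLipEvar (f := Leg1) (K := 4*A1) (u := 0) (v := 4⁻¹) (by positivity)
      (by norm_num) (fun x _ y _ => hd1 x y)
    rwa [show 4*A1*((4:ℝ)⁻¹ - 0) = A1 by ring] at this
  have hv2 : eVariationOn cc (Set.Icc 4⁻¹ 2⁻¹) ≤ ENNReal.ofReal R₁ := by
    rw [eVariationOn.eq_of_eqOn hE2]
    have := myLipEvar (f := Leg2) (K := 4*R₁) (u := 4⁻¹) (v := 2⁻¹) (by positivity)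
      (by norm_num) (fun x _ y _ => hd2 x y)
    rwa [show 4*R₁*((2:ℝ)⁻¹ - 4⁻¹) = R₁ by ring] at this
  have hv3 : eVariationOn cc (Set.Icc 2⁻¹ (3/4)) ≤ ENNReal.ofReal R₂ := by
    rw [eVariationOn.eq_of_eqOn hE3]
    have := myLipEvar (f := Leg3) (K := 4*R₂) (u := 2⁻¹) (v := 3/4) (by positivity)
      (by norm_num) (fun x _ y _ => hd3 x y)
    rwa [show 4*R₂*((3:ℝ)/4 - 2⁻¹) = R₂ by ring] at this
  have hv4 : eVariationOn cc (Set.Icc (3/4) 1) ≤ ENNReal.ofReal Bs := by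
    rw [eVariationOn.eq_of_eqOn hE4]
    have := myLipEvar (f := Leg4) (K := 4*Bs) (u := 3/4) (v := 1) (by positivity)
      (by norm_num) (fun x _ y _ => hd4 x y)
    rwa [show 4*Bs*((1:ℝ) - 3/4) = Bs by ring] at this
  -- split the total variation
  have hs1 := eVariationOn.Icc_add_Icc cc (s := Set.univ)
    (show (0:ℝ) ≤ 4⁻¹ by norm_num) (show (4⁻¹:ℝ) ≤ 1 by norm_num) (Set.mem_univ _)
  have hs2 := eVariationOn.Icc_add_Icc cc (s := Set.univ)
    (show (4⁻¹:ℝ) ≤ 2⁻¹ by norm_num) (show (2⁻¹:ℝ) ≤ 1 by norm_num) (Set.mem_univ _)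
  have hs3 := eVariationOn.Icc_add_Icc cc (s := Set.univ)
    (show (2⁻¹:ℝ) ≤ 3/4 by norm_num) (show (3/4:ℝ) ≤ 1 by norm_num) (Set.mem_univ _)
  simp only [Set.univ_inter] at hs1 hs2 hs3
  have htot : eVariationOn cc (Set.Icc 0 1)
      ≤ ENNReal.ofReal A1 + ENNReal.ofReal R₁ + ENNReal.ofReal R₂ + ENNReal.ofReal Bs := by
    rw [← hs1, ← hs2, ← hs3]
    calc eVariationOn cc (Set.Icc 0 4⁻¹) + (eVariationOn cc (Set.Icc 4⁻¹ 2⁻¹)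
          + (eVariationOn cc (Set.Icc 2⁻¹ (3/4)) + eVariationOn cc (Set.Icc (3/4) 1)))
        ≤ ENNReal.ofReal A1 + (ENNReal.ofReal R₁ + (ENNReal.ofReal R₂ + ENNReal.ofReal Bs)) := by
          exact add_le_add hv1 (add_le_add hv2 (add_le_add hv3 hv4))
      _ = ENNReal.ofReal A1 + ENNReal.ofReal R₁ + ENNReal.ofReal R₂ + ENNReal.ofReal Bs := by
          ring
  refine le_trans (myIntDist_le hcontc.continuousOn hcc0 hcc1) (le_trans htot ?_)
  rw [← ENNReal.ofReal_add hA10 hR₁0, ← ENNReal.ofReal_add (by positivity) hR₂0,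
    ← ENNReal.ofReal_add (by positivity) hBs0]



end PathMain

/-- Lemma 10: in the normalized setup for geodesics in `Y`, splitting `σ = ᾱ * β̄` at `t₀`,
one has `|L(ᾱᵢ) − a| ≤ 50δ` and `|L(β̄ᵢ) − b| ≤ 50δ` for `i = 1,2` (stated as two-sided
bounds on the lengths, which are a priori elements of `ℝ≥0∞`). -/
theorem stmt14 {X₁ X₂ : Type*} [MetricSpace X₁] [MetricSpace X₂]
    [ProperSpace X₁] [ProperSpace X₂]
    (hgeo₁ : GeodesicMS X₁) (hgeo₂ : GeodesicMS X₂)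
    (δ : ℝ) (hδ : 0 ≤ δ) (hhyp₁ : DeltaHyp X₁ δ) (hhyp₂ : DeltaHyp X₂ δ)
    (B₁ : X₁ → ℝ) (B₂ : X₂ → ℝ) (hB₁ : IsBusemann B₁) (hB₂ : IsBusemann B₂)
    (p p' : {q : X₁ × X₂ // B₁ q.1 = B₂ q.2})
    -- normalization: d₁(p₁,p₁') ≥ d₂(p₂,p₂') and B₁(p₁) = B₂(p₂) = 0
    (hnorm : dist p.1.2 p'.1.2 ≤ dist p.1.1 p'.1.1)
    (hB₁p : B₁ p.1.1 = 0)
    -- B-rays starting at the components of p and p'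
    (γ₁ γ₁' : ℝ → X₁) (γ₂ γ₂' : ℝ → X₂)
    (hγ₁ : IsBRay B₁ γ₁) (hγ₁' : IsBRay B₁ γ₁')
    (hγ₂ : IsBRay B₂ γ₂) (hγ₂' : IsBRay B₂ γ₂')
    (hγ₁0 : γ₁ 0 = p.1.1) (hγ₁'0 : γ₁' 0 = p'.1.1)
    (hγ₂0 : γ₂ 0 = p.1.2) (hγ₂'0 : γ₂' 0 = p'.1.2)
    -- a = max{a₁,a₂} and b = max{b₁,b₂}
    (a b : ℝ) (ha : a = max (gpB B₁ p.1.1 p'.1.1) (gpB B₂ p.1.2 p'.1.2))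
    (hb : b = max (gpB B₁ p'.1.1 p.1.1) (gpB B₂ p'.1.2 p.1.2))
    -- σ : a unit-speed geodesic from p to p' in (Y,d), d the interior metric
    (L : ℝ) (hL0 : 0 ≤ L) (hL : intDist p p' = ENNReal.ofReal L)
    (σ : ℝ → {q : X₁ × X₂ // B₁ q.1 = B₂ q.2})
    (hσ0 : σ 0 = p) (hσL : σ L = p')
    (hσ : ∀ s ∈ Set.Icc (0 : ℝ) L, ∀ t ∈ Set.Icc (0 : ℝ) L,
      intDist (σ s) (σ t) = ENNReal.ofReal |s - t|)
    -- γ_{p₁p₁'} : a geodesic segment in X₁ from p₁ to p₁'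
    (g : ℝ → X₁) (hg : IsGeodSegment g p.1.1 p'.1.1)
    -- t₀ : a minimizer of t ↦ d₁(σ₁(t), γ_{p₁p₁'}(a)) on [0, d(p,p')]
    (t₀ : ℝ) (ht₀ : t₀ ∈ Set.Icc (0 : ℝ) L)
    (ht₀min : ∀ t ∈ Set.Icc (0 : ℝ) L,
      dist ((σ t₀).1.1) (g a) ≤ dist ((σ t).1.1) (g a))
    :
    (ENNReal.ofReal (a - 50 * δ) ≤ eVariationOn (fun t => (σ t).1.1) (Set.Icc 0 t₀) ∧
      eVariationOn (fun t => (σ t).1.1) (Set.Icc 0 t₀) ≤ ENNReal.ofReal (a + 50 * δ)) ∧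
    (ENNReal.ofReal (a - 50 * δ) ≤ eVariationOn (fun t => (σ t).1.2) (Set.Icc 0 t₀) ∧
      eVariationOn (fun t => (σ t).1.2) (Set.Icc 0 t₀) ≤ ENNReal.ofReal (a + 50 * δ)) ∧
    (ENNReal.ofReal (b - 50 * δ) ≤ eVariationOn (fun t => (σ t).1.1) (Set.Icc t₀ L) ∧
      eVariationOn (fun t => (σ t).1.1) (Set.Icc t₀ L) ≤ ENNReal.ofReal (b + 50 * δ)) ∧
    (ENNReal.ofReal (b - 50 * δ) ≤ eVariationOn (fun t => (σ t).1.2) (Set.Icc t₀ L) ∧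
      eVariationOn (fun t => (σ t).1.2) (Set.Icc t₀ L) ≤ ENNReal.ofReal (b + 50 * δ)) := by
  -- ===== scalar bookkeeping =====
  have hpB2 : B₂ p.1.2 = 0 := by rw [← p.2]; exact hB₁p
  have hBp' : B₂ p'.1.2 = B₁ p'.1.1 := (p'.2).symm
  have hd12 : gpB B₂ p.1.2 p'.1.2 ≤ gpB B₁ p.1.1 p'.1.1 := by
    simp only [gpB]
    rw [hB₁p, hpB2, hBp']
    linarith
  have hd12' : gpB B₂ p'.1.2 p.1.2 ≤ gpB B₁ p'.1.1 p.1.1 := by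
    simp only [gpB]
    rw [hB₁p, hpB2, hBp', dist_comm p'.1.2 p.1.2, dist_comm p'.1.1 p.1.1]
    linarith
  have ha' : a = gpB B₁ p.1.1 p'.1.1 := by rw [ha, max_eq_left hd12]
  have hb' : b = gpB B₁ p'.1.1 p.1.1 := by rw [hb, max_eq_left hd12']
  have hab : a + b = dist p.1.1 p'.1.1 := by rw [ha', hb']; exact myGpB_sum _ _
  have ha0 : 0 ≤ a := by
    have h := myBusemann_sub_le hB₁ p'.1.1 p.1.1
    rw [ha']; simp only [gpB]
    rw [dist_comm p'.1.1 p.1.1] at h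
    linarith
  have hb0 : 0 ≤ b := by
    have h := myBusemann_sub_le hB₁ p.1.1 p'.1.1
    rw [hb']; simp only [gpB]
    rw [dist_comm p'.1.1 p.1.1]
    linarith
  have hBp1' : B₁ p'.1.1 = b - a := by
    rw [ha', hb']; simp only [gpB]
    rw [hB₁p, dist_comm p'.1.1 p.1.1]
    ring
  have hBp2' : B₂ p'.1.2 = b - a := by rw [hBp', hBp1']
  -- the X₂ Gromov products
  set a₂ := gpB B₂ p.1.2 p'.1.2 with ha₂
  set b₂ := gpB B₂ p'.1.2 p.1.2 with hb₂
  have ha₂0 : 0 ≤ a₂ := by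
    have h := myBusemann_sub_le hB₂ p'.1.2 p.1.2
    rw [ha₂]; simp only [gpB]
    rw [dist_comm p'.1.2 p.1.2] at h
    linarith
  have hb₂0 : 0 ≤ b₂ := by
    have h := myBusemann_sub_le hB₂ p.1.2 p'.1.2
    rw [hb₂]; simp only [gpB]
    rw [dist_comm p'.1.2 p.1.2]
    linarith
  have ha₂a : a₂ ≤ a := by rw [ha']; exact hd12
  have hdiff : a - a₂ = b - b₂ := by
    rw [ha', hb', ha₂, hb₂]; simp only [gpB]
    rw [hB₁p, hpB2, hBp', dist_comm p'.1.1 p.1.1, dist_comm p'.1.2 p.1.2]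
    ring
  -- ===== B-values of the rays =====
  have hB1γ0 : B₁ (γ₁ 0) = 0 := by rw [hγ₁0, hB₁p]
  have hB2γ0 : B₂ (γ₂ 0) = 0 := by rw [hγ₂0, hpB2]
  have hB1γ'0 : B₁ (γ₁' 0) = b - a := by rw [hγ₁'0, hBp1']
  have hB2γ'0 : B₂ (γ₂' 0) = b - a := by rw [hγ₂'0, hBp2']
  have hBγ₁a : B₁ (γ₁ a) = -a := by rw [myBRay_B hγ₁ ha0, hB1γ0]; ring
  have hBγ₁'b : B₁ (γ₁' b) = -a := by rw [myBRay_B hγ₁' hb0, hB1γ'0]; ring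
  have hBγ₂a₂ : B₂ (γ₂ a₂) = -a₂ := by rw [myBRay_B hγ₂ ha₂0, hB2γ0]; ring
  have hBγ₂'b₂ : B₂ (γ₂' b₂) = -a₂ := by
    rw [myBRay_B hγ₂' hb₂0, hB2γ'0]
    linarith
  -- ===== corner estimates =====
  have hr₁base : dist (γ₁ a) (γ₁' b) ≤ 8 * δ := by
    have h := myCorner hδ hgeo₁ hhyp₁ hB₁ hγ₁ hγ₁'
    rw [hγ₁0, hγ₁'0, ← ha', ← hb'] at h
    exact h
  have hr₂base : dist (γ₂ a₂) (γ₂' b₂) ≤ 8 * δ := by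
    have h := myCorner hδ hgeo₂ hhyp₂ hB₂ hγ₂ hγ₂'
    rw [hγ₂0, hγ₂'0, ← ha₂, ← hb₂] at h
    exact h
  -- pushed transfer distances
  have hR₁ : ∀ s : ℝ, 0 ≤ s → dist (γ₁ (a + s)) (γ₁' (b + s)) ≤ 12 * δ := by
    intro s hs
    have h := myPush hδ hgeo₁ hhyp₁ hB₁ hγ₁ hγ₁' ha0 hb0 hs
      (by rw [hBγ₁a, hBγ₁'b])
    linarith
  have hR₂ : ∀ s : ℝ, 0 ≤ s → dist (γ₂ (a + s)) (γ₂' (b + s)) ≤ 12 * δ := by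
    intro s hs
    have hh0 : 0 ≤ (a - a₂) + s := by linarith
    have h := myPush hδ hgeo₂ hhyp₂ hB₂ hγ₂ hγ₂' ha₂0 hb₂0 hh0
      (by rw [hBγ₂a₂, hBγ₂'b₂])
    rw [show a₂ + ((a - a₂) + s) = a + s by ring,
      show b₂ + ((a - a₂) + s) = b + s by linarith] at h
    linarith
  -- ===== the length bound =====
  have hppY : p.1 = (γ₁ 0, γ₂ 0) := by rw [hγ₁0, hγ₂0]
  have hppY' : p'.1 = (γ₁' 0, γ₂' 0) := by rw [hγ₁'0, hγ₂'0]
  have hLpath : ∀ s : ℝ, 0 ≤ s →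
      dist (γ₁ (a + s)) (γ₁' (b + s)) ≤ 2 * (a + s) →
      dist (γ₂ (a + s)) (γ₂' (b + s)) ≤ 2 * (b + s) →
      L ≤ a + b + 2 * s + dist (γ₁ (a + s)) (γ₁' (b + s))
        + dist (γ₂ (a + s)) (γ₂' (b + s)) := by
    intro s hs hc1 hc2
    obtain ⟨c₁, hc₁⟩ := hgeo₁ (γ₁ (a + s)) (γ₁' (b + s))
    obtain ⟨c₂, hc₂⟩ := hgeo₂ (γ₂ (a + s)) (γ₂' (b + s))
    have h := myPathBound hB₁ hB₂ hγ₁ hγ₁' hγ₂ hγ₂' ha0 hb0 hs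
      hB1γ0 hB2γ0 hB1γ'0 hB2γ'0 hc₁ hc₂ hc1 hc2 p p' hppY hppY'
    rw [hL] at h
    have hRHS : (0:ℝ) ≤ (a + s) + dist (γ₁ (a + s)) (γ₁' (b + s))
        + dist (γ₂ (a + s)) (γ₂' (b + s)) + (b + s) := by
      have := dist_nonneg (x := γ₁ (a + s)) (y := γ₁' (b + s))
      have := dist_nonneg (x := γ₂ (a + s)) (y := γ₂' (b + s))
      linarith
    have hle := (ENNReal.ofReal_le_ofReal_iff hRHS).1 h
    linarith
  -- P' := L - (a+b) ≥ 0
  have hd₁L : dist p.1.1 p'.1.1 ≤ L := by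
    have h1 : dist p p' ≤ L := myDist_le_of_intDist hL0 hL
    have h2 : dist p.1.1 p'.1.1 ≤ dist p p' := by
      rw [mySubDist]; exact le_max_left _ _
    linarith
  have hP'0 : 0 ≤ L - (a + b) := by rw [hab]; linarith
  -- case analysis for the length bound
  have hPbound : L - (a + b) ≤ 36 * δ ∧ (6 * δ ≤ a → 6 * δ ≤ b → L - (a + b) ≤ 20 * δ) := by
    constructor
    · have h := hLpath (6 * δ) (by linarith)
        (by have := hR₁ (6*δ) (by linarith); linarith)
        (by have := hR₂ (6*δ) (by linarith); linarith)
      have h1 := hR₁ (6*δ) (by linarith)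
      have h2 := hR₂ (6*δ) (by linarith)
      linarith
    · intro haδ hbδ
      have h := hLpath 0 le_rfl
        (by have := hr₁base
            rw [add_zero a, add_zero b]; linarith)
        (by have := hR₂ 0 le_rfl
            rw [add_zero a, add_zero b] at this ⊢; linarith)
      have h1 : dist (γ₁ (a + 0)) (γ₁' (b + 0)) ≤ 8 * δ := by
        rw [add_zero a, add_zero b]; exact hr₁base
      have h2 := hR₂ 0 le_rfl
      linarith
  -- ===== the minimizing point =====
  have haD : a ≤ dist p.1.1 p'.1.1 := by rw [← hab]; linarith
  have hga1 : dist p.1.1 (g a) = a := myGeod_dist_left hg ⟨ha0, haD⟩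
  have hga2 : dist (g a) p'.1.1 = b := by
    have := myGeod_dist_right hg ⟨ha0, haD⟩
    rw [this, ← hab]; ring
  -- Lipschitz property of σ in the subtype
  have hσlip : ∀ s ∈ Set.Icc (0:ℝ) L, ∀ t ∈ Set.Icc (0:ℝ) L,
      dist (σ s) (σ t) ≤ |s - t| :=
    fun s hs t ht => myDist_le_of_intDist (abs_nonneg _) (hσ s hs t ht)
  have hσlip1 : ∀ s ∈ Set.Icc (0:ℝ) L, ∀ t ∈ Set.Icc (0:ℝ) L,
      dist (σ s).1.1 (σ t).1.1 ≤ |s - t| := by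
    intro s hs t ht
    refine le_trans ?_ (hσlip s hs t ht)
    rw [mySubDist]; exact le_max_left _ _
  have hσlip2 : ∀ s ∈ Set.Icc (0:ℝ) L, ∀ t ∈ Set.Icc (0:ℝ) L,
      dist (σ s).1.2 (σ t).1.2 ≤ |s - t| := by
    intro s hs t ht
    refine le_trans ?_ (hσlip s hs t ht)
    rw [mySubDist]; exact le_max_right _ _
  -- E := dist of the minimizer to g a
  set E := dist ((σ t₀).1.1) (g a) with hE
  have hEa : E ≤ a := by
    have h := ht₀min 0 ⟨le_rfl, hL0⟩
    rw [hσ0, hga1] at h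
    exact h
  have hEb : E ≤ b := by
    have h := ht₀min L ⟨hL0, le_rfl⟩
    rw [hσL] at h
    rw [dist_comm (g a) p'.1.1] at hga2
    rw [hga2] at h
    exact h
  -- E ≤ (L - (a+b)) + 2δ via the intermediate-value witness
  have hEP : E ≤ (L - (a + b)) + 2 * δ := by
    rcases le_or_gt a ((L - (a + b)) + 2 * δ) with hcase | hcase
    · linarith
    · -- IVT witness
      have hf : ContinuousOn (fun t => dist p.1.1 ((σ t).1.1)) (Set.Icc 0 L) := by
        refine (LipschitzOnWith.of_dist_le_mul (K := 1) ?_).continuousOn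
        intro x hx y hy
        rw [Real.dist_eq, Real.dist_eq, NNReal.coe_one, one_mul]
        have h1 := hσlip1 x hx y hy
        have h2 := abs_dist_sub_le ((σ x).1.1) ((σ y).1.1) p.1.1
        rw [dist_comm ((σ x).1.1) p.1.1, dist_comm ((σ y).1.1) p.1.1] at h2
        linarith
      have hmem : a ∈ Set.Icc (dist p.1.1 ((σ 0).1.1)) (dist p.1.1 ((σ L).1.1)) := by
        rw [hσ0, hσL, dist_self]
        exact ⟨ha0, haD⟩
      obtain ⟨t₁, ht₁mem, ht₁⟩ := intermediate_value_Icc hL0 hf hmem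
      -- z := (σ t₁).1.1
      have hzd : dist p.1.1 ((σ t₁).1.1) = a := ht₁
      have ht₁a : a ≤ t₁ := by
        have h := hσlip1 0 ⟨le_rfl, hL0⟩ t₁ ht₁mem
        rw [hσ0] at h
        rw [← hzd]
        calc dist p.1.1 ((σ t₁).1.1) ≤ |0 - t₁| := h
          _ = t₁ := by rw [zero_sub, abs_neg, abs_of_nonneg ht₁mem.1]
      have hzp' : dist ((σ t₁).1.1) p'.1.1 ≤ L - t₁ := by
        have h := hσlip1 t₁ ht₁mem L ⟨hL0, le_rfl⟩
        rw [hσL] at h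
        calc dist ((σ t₁).1.1) p'.1.1 ≤ |t₁ - L| := h
          _ = L - t₁ := by rw [abs_of_nonpos (by linarith [ht₁mem.2]), neg_sub]
      have hzp'2 : dist ((σ t₁).1.1) p'.1.1 ≤ b + (L - (a + b)) := by linarith
      set τ := gp ((σ t₁).1.1) p'.1.1 p.1.1 with hτ
      have hτval : τ = (a + (a + b) - dist ((σ t₁).1.1) p'.1.1) / 2 := by
        rw [hτ]; simp only [gp]
        rw [dist_comm ((σ t₁).1.1) p.1.1, hzd, dist_comm p'.1.1 p.1.1, ← hab]
      have hτlb : a - (L - (a + b)) / 2 ≤ τ := by rw [hτval]; linarith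
      have hτub : τ ≤ a := by
        rw [hτval]
        have : dist ((σ t₁).1.1) p'.1.1 ≥ b := by
          have h := dist_triangle p.1.1 ((σ t₁).1.1) p'.1.1
          rw [hzd] at h
          linarith [hab]
        linarith
      have hτ0 : 0 ≤ τ := by linarith
      have hS := myS hδ hgeo₁ hhyp₁ hg ((σ t₁).1.1) (t := τ)
        ⟨hτ0, le_trans hτub haD⟩ le_rfl
      rw [hzd] at hS
      have hgτa : dist (g τ) (g a) = a - τ := by
        rw [hg.2.2 τ ⟨hτ0, le_trans hτub haD⟩ a ⟨ha0, haD⟩,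
          abs_of_nonpos (by linarith)]
        ring
      have hza : dist ((σ t₁).1.1) (g a) ≤ 2 * (a - τ) + 2 * δ := by
        have h := dist_triangle ((σ t₁).1.1) (g τ) (g a)
        linarith
      have hmin := ht₀min t₁ ht₁mem
      linarith
  -- combined bound : (L - (a+b)) + E ≤ 42δ
  have hPE : (L - (a + b)) + E ≤ 42 * δ := by
    rcases le_or_gt (6 * δ) a with haδ | haδ
    · rcases le_or_gt (6 * δ) b with hbδ | hbδ
      · have := hPbound.2 haδ hbδ
        linarith
      · have := hPbound.1
        linarith
    · have := hPbound.1
      linarith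
  have hE42 : E ≤ 42 * δ := by linarith
  -- ===== estimates at the minimizer =====
  have hBga : B₁ (g a) ≤ -a + 2 * δ := by
    have h := myT hδ hgeo₁ hhyp₁ hB₁ hg (t := a) ⟨ha0, haD⟩
    rw [hB₁p, hBp1', ← hab] at h
    rw [show (0:ℝ) - a = -a by ring] at h
    rw [show b - a - (a + b - a) = -a by ring] at h
    rw [max_self] at h
    linarith
  have hB1q : B₁ ((σ t₀).1.1) ≤ -a + 2 * δ + E := by
    have h := myBusemann_sub_le hB₁ ((σ t₀).1.1) (g a)
    rw [← hE] at h
    linarith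
  have hq2B : B₂ ((σ t₀).1.2) = B₁ ((σ t₀).1.1) := ((σ t₀).2).symm
  -- coordinate distance lower bounds
  have hd11 : a - E ≤ dist p.1.1 ((σ t₀).1.1) := by
    have h := dist_triangle p.1.1 ((σ t₀).1.1) (g a)
    rw [← hE] at h
    linarith [hga1, h]
  have hd12q : b - E ≤ dist ((σ t₀).1.1) p'.1.1 := by
    have h := dist_triangle (g a) ((σ t₀).1.1) p'.1.1
    rw [dist_comm (g a) ((σ t₀).1.1), ← hE] at h
    linarith [hga2, h]
  have hd21 : a - 2 * δ - E ≤ dist p.1.2 ((σ t₀).1.2) := by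
    have h := myBusemann_sub_le hB₂ p.1.2 ((σ t₀).1.2)
    rw [hpB2, hq2B] at h
    linarith
  have hd22 : b - 2 * δ - E ≤ dist ((σ t₀).1.2) p'.1.2 := by
    have h := myBusemann_sub_le hB₂ p'.1.2 ((σ t₀).1.2)
    rw [hBp2', hq2B, dist_comm p'.1.2 ((σ t₀).1.2)] at h
    linarith
  -- parameter bounds
  have hdistpq : dist p (σ t₀) ≤ t₀ := by
    have h := hσlip 0 ⟨le_rfl, hL0⟩ t₀ ht₀
    rw [hσ0] at h
    calc dist p (σ t₀) ≤ |0 - t₀| := h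
      _ = t₀ := by rw [zero_sub, abs_neg, abs_of_nonneg ht₀.1]
  have hdistqp' : dist (σ t₀) p' ≤ L - t₀ := by
    have h := hσlip t₀ ht₀ L ⟨hL0, le_rfl⟩
    rw [hσL] at h
    calc dist (σ t₀) p' ≤ |t₀ - L| := h
      _ = L - t₀ := by rw [abs_of_nonpos (by linarith [ht₀.2]), neg_sub]
  have ht₀lb : a - E ≤ t₀ := by
    refine le_trans hd11 (le_trans ?_ hdistpq)
    rw [mySubDist]; exact le_max_left _ _
  have ht₀ub : t₀ ≤ a + (L - (a + b)) + E := by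
    have h : b - E ≤ L - t₀ := by
      refine le_trans hd12q (le_trans ?_ hdistqp')
      rw [mySubDist]; exact le_max_left _ _
    linarith
  have hLt₀ub : L - t₀ ≤ b + (L - (a + b)) + E := by linarith
  -- ===== conclusion =====
  have ht₀50 : t₀ ≤ a + 50 * δ := by linarith
  have hLt₀50 : L - t₀ ≤ b + 50 * δ := by linarith
  have hIccsub1 : Set.Icc (0:ℝ) t₀ ⊆ Set.Icc (0:ℝ) L := Set.Icc_subset_Icc le_rfl ht₀.2
  have hIccsub2 : Set.Icc t₀ L ⊆ Set.Icc (0:ℝ) L := Set.Icc_subset_Icc ht₀.1 le_rfl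
  have hub1 : ∀ f : ℝ → {q : X₁ × X₂ // B₁ q.1 = B₂ q.2} → True, True := fun _ => trivial
  -- upper bounds
  have hupper1 : eVariationOn (fun t => (σ t).1.1) (Set.Icc 0 t₀)
      ≤ ENNReal.ofReal (a + 50 * δ) := by
    have h := myLipEvar (f := fun t => (σ t).1.1) (K := 1) (u := 0) (v := t₀)
      zero_le_one ht₀.1 (fun x hx y hy => by
        rw [one_mul]; exact hσlip1 x (hIccsub1 hx) y (hIccsub1 hy))
    rw [one_mul, sub_zero] at h
    exact le_trans h (ENNReal.ofReal_le_ofReal ht₀50)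
  have hupper2 : eVariationOn (fun t => (σ t).1.2) (Set.Icc 0 t₀)
      ≤ ENNReal.ofReal (a + 50 * δ) := by
    have h := myLipEvar (f := fun t => (σ t).1.2) (K := 1) (u := 0) (v := t₀)
      zero_le_one ht₀.1 (fun x hx y hy => by
        rw [one_mul]; exact hσlip2 x (hIccsub1 hx) y (hIccsub1 hy))
    rw [one_mul, sub_zero] at h
    exact le_trans h (ENNReal.ofReal_le_ofReal ht₀50)
  have hupper3 : eVariationOn (fun t => (σ t).1.1) (Set.Icc t₀ L)
      ≤ ENNReal.ofReal (b + 50 * δ) := by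
    have h := myLipEvar (f := fun t => (σ t).1.1) (K := 1) (u := t₀) (v := L)
      zero_le_one ht₀.2 (fun x hx y hy => by
        rw [one_mul]; exact hσlip1 x (hIccsub2 hx) y (hIccsub2 hy))
    rw [one_mul] at h
    exact le_trans h (ENNReal.ofReal_le_ofReal hLt₀50)
  have hupper4 : eVariationOn (fun t => (σ t).1.2) (Set.Icc t₀ L)
      ≤ ENNReal.ofReal (b + 50 * δ) := by
    have h := myLipEvar (f := fun t => (σ t).1.2) (K := 1) (u := t₀) (v := L)
      zero_le_one ht₀.2 (fun x hx y hy => by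
        rw [one_mul]; exact hσlip2 x (hIccsub2 hx) y (hIccsub2 hy))
    rw [one_mul] at h
    exact le_trans h (ENNReal.ofReal_le_ofReal hLt₀50)
  -- lower bounds
  have hlow1 : ENNReal.ofReal (a - 50 * δ)
      ≤ eVariationOn (fun t => (σ t).1.1) (Set.Icc 0 t₀) := by
    refine le_trans ?_ (eVariationOn.edist_le (fun t => (σ t).1.1)
      (show (0:ℝ) ∈ Set.Icc (0:ℝ) t₀ from ⟨le_rfl, ht₀.1⟩)
      (show t₀ ∈ Set.Icc (0:ℝ) t₀ from ⟨ht₀.1, le_rfl⟩))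
    rw [edist_dist]
    exact ENNReal.ofReal_le_ofReal
      (show a - 50*δ ≤ dist ((σ 0).1.1) ((σ t₀).1.1) by rw [hσ0]; linarith)
  have hlow2 : ENNReal.ofReal (a - 50 * δ)
      ≤ eVariationOn (fun t => (σ t).1.2) (Set.Icc 0 t₀) := by
    refine le_trans ?_ (eVariationOn.edist_le (fun t => (σ t).1.2)
      (show (0:ℝ) ∈ Set.Icc (0:ℝ) t₀ from ⟨le_rfl, ht₀.1⟩)
      (show t₀ ∈ Set.Icc (0:ℝ) t₀ from ⟨ht₀.1, le_rfl⟩))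
    rw [edist_dist]
    exact ENNReal.ofReal_le_ofReal
      (show a - 50*δ ≤ dist ((σ 0).1.2) ((σ t₀).1.2) by rw [hσ0]; linarith)
  have hlow3 : ENNReal.ofReal (b - 50 * δ)
      ≤ eVariationOn (fun t => (σ t).1.1) (Set.Icc t₀ L) := by
    refine le_trans ?_ (eVariationOn.edist_le (fun t => (σ t).1.1)
      (show t₀ ∈ Set.Icc t₀ L from ⟨le_rfl, ht₀.2⟩)
      (show L ∈ Set.Icc t₀ L from ⟨ht₀.2, le_rfl⟩))
    rw [edist_dist]
    exact ENNReal.ofReal_le_ofReal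
      (show b - 50*δ ≤ dist ((σ t₀).1.1) ((σ L).1.1) by rw [hσL]; linarith)
  have hlow4 : ENNReal.ofReal (b - 50 * δ)
      ≤ eVariationOn (fun t => (σ t).1.2) (Set.Icc t₀ L) := by
    refine le_trans ?_ (eVariationOn.edist_le (fun t => (σ t).1.2)
      (show t₀ ∈ Set.Icc t₀ L from ⟨le_rfl, ht₀.2⟩)
      (show L ∈ Set.Icc t₀ L from ⟨ht₀.2, le_rfl⟩))
    rw [edist_dist]
    exact ENNReal.ofReal_le_ofReal
      (show b - 50*δ ≤ dist ((σ t₀).1.2) ((σ L).1.2) by rw [hσL]; linarith)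
  exact ⟨⟨hlow1, hupper1⟩, ⟨hlow2, hupper2⟩, ⟨hlow3, hupper3⟩, ⟨hlow4, hupper4⟩⟩
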